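/- K-infusion is an involution: for increasing tableaux T of shape λ/α and U of shape ν/λ, applying K-infusion to the pair (K-infusion₁(T,U), K-infusion₂(T,U)) returns the original pair (T,U). -/

import Mathlib

open Finset
open scoped Classical

/-- A box of a Young diagram: (row, column), rows increasing downward. -/
abbrev Box : Type := ℕ × ℕ

/-- A Young diagram: a finite lower set in both coordinates. -/
def IsYoung (μ : Finset Box) : Prop :=
  (∀ r c : ℕ, (r + 1, c) ∈ μ → (r, c) ∈ μ) ∧
  (∀ r c : ℕ, (r, c + 1) ∈ μ → (r, c) ∈ μ)

/-- Two boxes are adjacent (share an edge). -/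
def adjB (a b : Box) : Prop :=
  (a.1 = b.1 ∧ (a.2 + 1 = b.2 ∨ b.2 + 1 = a.2)) ∨
  (a.2 = b.2 ∧ (a.1 + 1 = b.1 ∨ b.1 + 1 = a.1))

/-- Connectivity within a finite set of boxes. -/
def conn (S : Finset Box) (a b : Box) : Prop :=
  Relation.ReflTransGen (fun x y => x ∈ S ∧ y ∈ S ∧ adjB x y) a b

/-- Entries strictly increase along rows and columns. -/
def IncreasingOn (dom : Finset Box) (f : Box → ℕ) : Prop :=
  (∀ r c : ℕ, (r, c) ∈ dom → (r, c + 1) ∈ dom → f (r, c) < f (r, c + 1)) ∧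
  (∀ r c : ℕ, (r, c) ∈ dom → (r + 1, c) ∈ dom → f (r, c) < f (r + 1, c))

def maxEntry (dom : Finset Box) (f : Box → ℕ) : ℕ := dom.sup f

/-- An increasing tableau: positive entries, strictly increasing along rows and
columns, and every value `1,…,max` appears at least once. -/
def IsIncTab (dom : Finset Box) (f : Box → ℕ) : Prop :=
  IncreasingOn dom f ∧ (∀ b ∈ dom, 1 ≤ f b) ∧
  (∀ v : ℕ, 1 ≤ v → v ≤ maxEntry dom f → ∃ b ∈ dom, f b = v)

/-- A standard Young tableau: an increasing tableau with distinct entries. -/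
def IsSYT (dom : Finset Box) (f : Box → ℕ) : Prop :=
  IsIncTab dom f ∧ ∀ a ∈ dom, ∀ b ∈ dom, f a = f b → a = b

/-- An inner corner of `λ`: a maximally southeast box of `λ`. -/
def InnerCorner (lam : Finset Box) (x : Box) : Prop :=
  x ∈ lam ∧ (x.1 + 1, x.2) ∉ lam ∧ (x.1, x.2 + 1) ∉ lam

/-- An outer corner of `ν`: a maximally northwest box outside `ν`. -/
def OuterCorner (nu : Finset Box) (x : Box) : Prop :=
  x ∉ nu ∧ (x.1 = 0 ∨ (x.1 - 1, x.2) ∈ nu) ∧ (x.2 = 0 ∨ (x.1, x.2 - 1) ∈ nu)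

/-- No two boxes of `A` share a row or a column. -/
def NoTwoSameRowCol (A : Finset Box) : Prop :=
  ∀ a ∈ A, ∀ b ∈ A, a ≠ b → a.1 ≠ b.1 ∧ a.2 ≠ b.2

/-- One `switch` stage of a K-jdt slide: in the union of ribbons formed by the
•-boxes (`st.1`) and the boxes of the numerical region `st.2.1` with entry `i`,
swap the two symbols on every connected component with at least two boxes
(single-box components are unchanged).  The state is (dots, numerical domain,
numerical entries). -/
noncomputable def switchStep (st : Finset Box × Finset Box × (Box → ℕ)) (i : ℕ) :
    Finset Box × Finset Box × (Box → ℕ) :=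
  let dots := st.1
  let dom := st.2.1
  let f := st.2.2
  let S : Finset Box := dots ∪ dom.filter (fun b => f b = i)
  let sw : Box → Prop := fun b => ∃ b' ∈ S, b' ≠ b ∧ conn S b b'
  ( dom.filter (fun b => f b = i ∧ sw b) ∪ dots.filter (fun b => ¬ sw b),
    dom.filter (fun b => ¬ (f b = i ∧ sw b)) ∪ dots.filter sw,
    fun b => if b ∈ dots ∧ sw b then i else f b )

/-- The state of a K-jdt slide started with •'s at `xs`, after processing the
values `1, 2, …, m`. -/
noncomputable def KState (xs dom : Finset Box) (f : Box → ℕ) (m : ℕ) :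
    Finset Box × Finset Box × (Box → ℕ) :=
  (List.range m).foldl (fun st i => switchStep st (i + 1)) (xs, dom, f)

/-- The K-theoretic jeu de taquin slide of the tableau `(dom, f)` into the set
`xs` of inner corners: process the values `1,…,max` and discard the final •'s. -/
noncomputable def KJdt (xs dom : Finset Box) (f : Box → ℕ) : Finset Box × (Box → ℕ) :=
  ((KState xs dom f (maxEntry dom f)).2.1, (KState xs dom f (maxEntry dom f)).2.2)

/-- The state of a reverse K-jdt slide: •'s start at `xs` (outer corners) and the
values `m, m-1, …, 1` are processed in decreasing order. -/
noncomputable def KRevState (xs dom : Finset Box) (f : Box → ℕ) (m : ℕ) :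
    Finset Box × Finset Box × (Box → ℕ) :=
  (List.range m).foldr (fun i st => switchStep st (i + 1)) (xs, dom, f)

/-- A slide applied to the state (inner shape `λ`, tableau domain, entries). -/
noncomputable def doSlide (st : Finset Box × Finset Box × (Box → ℕ)) (xs : Finset Box) :
    Finset Box × Finset Box × (Box → ℕ) :=
  (st.1 \ xs, (KJdt xs st.2.1 st.2.2).1, (KJdt xs st.2.1 st.2.2).2)

/-- A reverse slide applied to the state (inner shape `λ`, tableau domain, entries). -/
noncomputable def doRevSlide (st : Finset Box × Finset Box × (Box → ℕ)) (xs : Finset Box) :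
    Finset Box × Finset Box × (Box → ℕ) :=
  (st.1 \ (KRevState xs st.2.1 st.2.2 (maxEntry st.2.1 st.2.2)).1,
   (KRevState xs st.2.1 st.2.2 (maxEntry st.2.1 st.2.2)).2.1,
   (KRevState xs st.2.1 st.2.2 (maxEntry st.2.1 st.2.2)).2.2)

/-- One step of a rectification: a K-jdt slide into a nonempty set of inner corners. -/
def RectStep (p q : Finset Box × Finset Box × (Box → ℕ)) : Prop :=
  ∃ xs : Finset Box, xs.Nonempty ∧ (∀ x ∈ xs, InnerCorner p.1 x) ∧ q = doSlide p xs

/-- The tableau `(dom, f)` of shape `ν/λ` admits a rectification order ending at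
the straight-shape tableau `(dom', f')`. -/
def RectTo (lam dom : Finset Box) (f : Box → ℕ) (dom' : Finset Box) (f' : Box → ℕ) : Prop :=
  ∃ g : Box → ℕ, Relation.ReflTransGen RectStep (lam, dom, f) (∅, dom', g) ∧
    ∀ b ∈ dom', g b = f' b

def rowLen (μ : Finset Box) (r : ℕ) : ℕ := (μ.filter (fun b => b.1 = r)).card

/-- The superstandard tableau of straight shape `μ`: rows filled consecutively. -/
def sstd (μ : Finset Box) : Box → ℕ :=
  fun b => (∑ i ∈ Finset.range b.1, rowLen μ i) + b.2 + 1

/-- `a` occurs before `b` in the reading word (rows left to right, bottom to top). -/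
def ReadBefore (a b : Box) : Prop := b.1 < a.1 ∨ (a.1 = b.1 ∧ a.2 < b.2)

/-- Length of the longest strictly increasing subsequence of the reading word. -/
noncomputable def LIS (dom : Finset Box) (f : Box → ℕ) : ℕ :=
  (dom.powerset.filter
    (fun I => ∀ a ∈ I, ∀ b ∈ I, ReadBefore a b → f a < f b)).sup Finset.card

/-- One step of K-infusion: slide the boxes carrying the largest label `m` of the
inner tableau through the outer tableau, recording `m` at the vacated holes. -/
noncomputable def infusionStep
    (st : (Finset Box × (Box → ℕ)) × (Finset Box × (Box → ℕ)) × (Finset Box × (Box → ℕ))) :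
    (Finset Box × (Box → ℕ)) × (Finset Box × (Box → ℕ)) × (Finset Box × (Box → ℕ)) :=
  let m := maxEntry st.1.1 st.1.2
  let xs := st.1.1.filter (fun b => st.1.2 b = m)
  let ks := KState xs st.2.1.1 st.2.1.2 (maxEntry st.2.1.1 st.2.1.2)
  ( (st.1.1 \ xs, st.1.2),
    (ks.2.1, ks.2.2),
    (st.2.2.1 ∪ ks.1, fun b => if b ∈ ks.1 then m else st.2.2.2 b) )

/-- K-infusion of the pair `(T, U)`, where `U`'s shape extends `T`'s shape:
returns `(K-infusion₁(T,U), K-infusion₂(T,U))`. -/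
noncomputable def KInfusion (Tdom : Finset Box) (Tf : Box → ℕ)
    (Udom : Finset Box) (Uf : Box → ℕ) :
    (Finset Box × (Box → ℕ)) × (Finset Box × (Box → ℕ)) :=
  ((infusionStep^[maxEntry Tdom Tf] ((Tdom, Tf), (Udom, Uf), (∅, fun _ => 0))).2.1,
   (infusionStep^[maxEntry Tdom Tf] ((Tdom, Tf), (Udom, Uf), (∅, fun _ => 0))).2.2)

/-- `Δ(T)`: erase the entry `1` at the northwest corner, subtract one from the
remaining entries, and slide into the vacated corner. -/
noncomputable def Delta (p : Finset Box × (Box → ℕ)) : Finset Box × (Box → ℕ) :=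
  KJdt {((0 : ℕ), (0 : ℕ))} (p.1.erase (0, 0)) (fun b => p.2 b - 1)

/-- K-evacuation: box `b` receives label `i` when `b` belongs to the shape of
`Δ^{i-1}(T)` but not to the shape of `Δ^{i}(T)`. -/
noncomputable def Kevac (p : Finset Box × (Box → ℕ)) : Box → ℕ :=
  fun b => sInf {i : ℕ | b ∉ (Delta^[i] p).1}

/-- A horizontal strip: no two boxes in the same column. -/
def HorizontalStrip (dom : Finset Box) : Prop :=
  ∀ a ∈ dom, ∀ b ∈ dom, a ≠ b → a.2 ≠ b.2

def LeftmostIn (dom : Finset Box) (r c : ℕ) : Prop :=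
  (r, c) ∈ dom ∧ ∀ c' < c, (r, c') ∉ dom

def RightmostIn (dom : Finset Box) (r c : ℕ) : Prop :=
  (r, c) ∈ dom ∧ ∀ c' > c, (r, c') ∉ dom

/-- A `t`-Pieri filling of a horizontal strip: entries of each row consecutive,
the bottom row starts with `1`, each other row starts with the last entry of the
next nonempty row below it, or with that entry plus one; entries are `1,…,t`. -/
def IsPieri (dom : Finset Box) (f : Box → ℕ) (t : ℕ) : Prop :=
  HorizontalStrip dom ∧
  (∀ r c : ℕ, (r, c) ∈ dom → (r, c + 1) ∈ dom → f (r, c + 1) = f (r, c) + 1) ∧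
  (∀ r c : ℕ, LeftmostIn dom r c → (∀ b ∈ dom, b.1 ≤ r) → f (r, c) = 1) ∧
  (∀ r c r' c' : ℕ, LeftmostIn dom r c → RightmostIn dom r' c' → r < r' →
    (∀ b ∈ dom, ¬ (r < b.1 ∧ b.1 < r')) →
    (f (r, c) = f (r', c') ∨ f (r, c) = f (r', c') + 1)) ∧
  (∀ b ∈ dom, 1 ≤ f b ∧ f b ≤ t) ∧ (dom.Nonempty → ∃ b ∈ dom, f b = t)

/-- The domain of the one-row shape `(t)`. -/
def rowDom (t : ℕ) : Finset Box := (Finset.range t).image (fun c => ((0 : ℕ), c))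

/-- The entries of the superstandard one-row tableau `S_(t)`. -/
def rowEnt : Box → ℕ := fun b => b.2 + 1

def numRows (dom : Finset Box) : ℕ := (dom.image Prod.fst).card

/-- The number of increasing tableaux of shape `ν/λ` whose K-rectification (for
some, equivalently by Theorem 1 any, rectification order) is the superstandard
tableau `S_μ`.  Tableaux are normalized to vanish off their domain. -/
noncomputable def KrectCount (lam nu mu : Finset Box) : ℕ :=
  Set.ncard {f : Box → ℕ | (∀ b, b ∉ nu \ lam → f b = 0) ∧ IsIncTab (nu \ lam) f ∧
    ∃ g, Relation.ReflTransGen RectStep (lam, nu \ lam, f) (∅, mu, g) ∧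
      ∀ b ∈ mu, g b = sstd mu b}

/-- Apply a (forward or reverse) K-jdt slide, as specified by `mv`. -/
noncomputable def applyMove (st : Finset Box × Finset Box × (Box → ℕ))
    (mv : Bool × Finset Box) : Finset Box × Finset Box × (Box → ℕ) :=
  if mv.1 then doSlide st mv.2 else doRevSlide st mv.2

def ValidMove (st : Finset Box × Finset Box × (Box → ℕ)) (mv : Bool × Finset Box) : Prop :=
  mv.2.Nonempty ∧ (mv.1 = true → ∀ x ∈ mv.2, InnerCorner st.1 x) ∧
    (mv.1 = false → ∀ x ∈ mv.2, OuterCorner (st.1 ∪ st.2.1) x)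

noncomputable def applySeq (L : List (Bool × Finset Box))
    (st : Finset Box × Finset Box × (Box → ℕ)) : Finset Box × Finset Box × (Box → ℕ) :=
  L.foldl applyMove st

def ValidSeq : List (Bool × Finset Box) → (Finset Box × Finset Box × (Box → ℕ)) → Prop
  | [], _ => True
  | mv :: L, st => ValidMove st mv ∧ ValidSeq L (applyMove st mv)

/-- K-dual equivalence: every common sequence of (forward or reverse) slides
produces tableaux of the same shape. -/
def KDualEquiv (lam dom : Finset Box) (f g : Box → ℕ) : Prop :=
  ∀ L : List (Bool × Finset Box),
    ValidSeq L (lam, dom, f) → ValidSeq L (lam, dom, g) →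
    (applySeq L (lam, dom, f)).2.1 = (applySeq L (lam, dom, g)).2.1





/-- A combined configuration: each box optionally carries a side (true = inner/T-origin,
false = outer/U-origin) and a label. -/
abbrev Config : Type := Box → Option (Bool × ℕ)

/-- The active set for the switch of inner label `t` against outer label `u`. -/
def Sset (t u : ℕ) (c : Config) : Set Box :=
  {b | c b = some (true, t) ∨ c b = some (false, u)}

/-- Connectivity inside a set of boxes. -/
def connS (S : Set Box) (a b : Box) : Prop :=
  Relation.ReflTransGen (fun x y => x ∈ S ∧ y ∈ S ∧ adjB x y) a b

def swS (t u : ℕ) (c : Config) (b : Box) : Prop :=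
  ∃ b' ∈ Sset t u c, b' ≠ b ∧ connS (Sset t u c) b b'

def flipLab (t u : ℕ) (l : Option (Bool × ℕ)) : Option (Bool × ℕ) :=
  if l = some (true, t) then some (false, u) else some (true, t)

/-- The elementary switch on configurations. -/
noncomputable def sigma (t u : ℕ) (c : Config) : Config :=
  fun b => if b ∈ Sset t u c ∧ swS t u c b then flipLab t u (c b) else c b

lemma sigma_apply (t u : ℕ) (c : Config) (b : Box) :
    sigma t u c b = if b ∈ Sset t u c ∧ swS t u c b then flipLab t u (c b) else c b := rfl

lemma mem_Sset {t u : ℕ} {c : Config} {b : Box} :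
    b ∈ Sset t u c ↔ c b = some (true, t) ∨ c b = some (false, u) := Iff.rfl

lemma flipLab_mem {t u : ℕ} {l : Option (Bool × ℕ)}
    (h : l = some (true, t) ∨ l = some (false, u)) :
    flipLab t u l = some (true, t) ∨ flipLab t u l = some (false, u) := by
  rcases h with h | h <;> simp [flipLab, h]

lemma flipLab_flipLab {t u : ℕ} {l : Option (Bool × ℕ)}
    (h : l = some (true, t) ∨ l = some (false, u)) :
    flipLab t u (flipLab t u l) = l := by
  rcases h with h | h <;> simp [flipLab, h]

lemma Sset_sigma (t u : ℕ) (c : Config) : Sset t u (sigma t u c) = Sset t u c := by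
  ext b
  simp only [mem_Sset, Set.mem_setOf_eq] at *
  by_cases hb : b ∈ Sset t u c ∧ swS t u c b
  · rw [sigma_apply, if_pos hb]
    constructor
    · intro _; exact hb.1
    · intro h; exact flipLab_mem h
  · rw [sigma_apply, if_neg hb]

lemma swS_sigma (t u : ℕ) (c : Config) : swS t u (sigma t u c) = swS t u c := by
  unfold swS connS; rw [Sset_sigma]

lemma sigma_sigma (t u : ℕ) (c : Config) : sigma t u (sigma t u c) = c := by
  funext b
  rw [sigma_apply, Sset_sigma, swS_sigma]
  by_cases hb : b ∈ Sset t u c ∧ swS t u c b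
  · rw [if_pos hb, sigma_apply, if_pos hb, flipLab_flipLab hb.1]
  · rw [if_neg hb, sigma_apply, if_neg hb]

lemma label_ne_aux {t u t' u' : ℕ} (ht : t ≠ t') (hu : u ≠ u')
    {l : Option (Bool × ℕ)} (h : l = some (true, t') ∨ l = some (false, u')) :
    l ≠ some (true, t) ∧ l ≠ some (false, u) := by
  rcases h with h | h <;> subst h <;>
    exact ⟨by simp [ht.symm, hu.symm], by simp [ht.symm, hu.symm]⟩

lemma Sset_sigma_ne {t u t' u' : ℕ} (ht : t ≠ t') (hu : u ≠ u') (c : Config) :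
    Sset t u (sigma t' u' c) = Sset t u c := by
  ext b
  simp only [mem_Sset, Set.mem_setOf_eq]
  by_cases hb : b ∈ Sset t' u' c ∧ swS t' u' c b
  · rw [sigma_apply, if_pos hb]
    have h1 := label_ne_aux ht hu (flipLab_mem hb.1)
    have h2 := label_ne_aux ht hu hb.1
    constructor
    · rintro (h | h) <;> [exact absurd h h1.1; exact absurd h h1.2]
    · rintro (h | h) <;> [exact absurd h h2.1; exact absurd h h2.2]
  · rw [sigma_apply, if_neg hb]

lemma swS_sigma_ne {t u t' u' : ℕ} (ht : t ≠ t') (hu : u ≠ u') (c : Config) :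
    swS t u (sigma t' u' c) = swS t u c := by
  unfold swS connS; rw [Sset_sigma_ne ht hu]

lemma sigma_comm {t u t' u' : ℕ} (ht : t ≠ t') (hu : u ≠ u') (c : Config) :
    sigma t u (sigma t' u' c) = sigma t' u' (sigma t u c) := by
  funext b
  have hS : ¬ (b ∈ Sset t u c ∧ b ∈ Sset t' u' c) := by
    rintro ⟨h1, h2⟩
    have := label_ne_aux ht hu h2
    rcases h1 with h | h <;> [exact this.1 h; exact this.2 h]
  have hL : sigma t u (sigma t' u' c) b =
      if b ∈ Sset t u c ∧ swS t u c b then flipLab t u (sigma t' u' c b)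
      else sigma t' u' c b := by
    rw [sigma_apply, Sset_sigma_ne ht hu, swS_sigma_ne ht hu]
  have hR : sigma t' u' (sigma t u c) b =
      if b ∈ Sset t' u' c ∧ swS t' u' c b then flipLab t' u' (sigma t u c b)
      else sigma t u c b := by
    rw [sigma_apply, Sset_sigma_ne ht.symm hu.symm, swS_sigma_ne ht.symm hu.symm]
  rw [hL, hR]
  simp only [sigma_apply]
  by_cases hA : b ∈ Sset t u c ∧ swS t u c b
  · have hB : ¬ (b ∈ Sset t' u' c ∧ swS t' u' c b) := fun hB => hS ⟨hA.1, hB.1⟩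
    rw [if_pos hA, if_pos hA, if_neg hB, if_neg hB]
  · rw [if_neg hA, if_neg hA]



noncomputable def applyW (L : List (ℕ × ℕ)) (c : Config) : Config :=
  L.foldl (fun c p => sigma p.1 p.2 c) c

lemma applyW_nil (c : Config) : applyW [] c = c := rfl

lemma applyW_cons (p : ℕ × ℕ) (L : List (ℕ × ℕ)) (c : Config) :
    applyW (p :: L) c = applyW L (sigma p.1 p.2 c) := rfl

lemma applyW_append (L1 L2 : List (ℕ × ℕ)) (c : Config) :
    applyW (L1 ++ L2) c = applyW L2 (applyW L1 c) := List.foldl_append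

/-- Commute a single switch past a list of switches that all differ in both coordinates. -/
lemma applyW_comm_single (q : ℕ × ℕ) (L : List (ℕ × ℕ))
    (h : ∀ p ∈ L, p.1 ≠ q.1 ∧ p.2 ≠ q.2) (c : Config) :
    applyW L (sigma q.1 q.2 c) = sigma q.1 q.2 (applyW L c) := by
  induction L generalizing c with
  | nil => rfl
  | cons p L ih =>
    rw [applyW_cons, applyW_cons, sigma_comm (h p (by simp)).1 (h p (by simp)).2 c]
    exact ih (fun p hp => h p (by simp [hp])) _

/-- Applying a word followed by its reverse is the identity. -/
lemma applyW_reverse (L : List (ℕ × ℕ)) (c : Config) :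
    applyW (L.reverse) (applyW L c) = c := by
  induction L generalizing c with
  | nil => rfl
  | cons p L ih =>
    rw [applyW_cons, List.reverse_cons, applyW_append, ih, applyW_cons, applyW_nil,
      sigma_sigma]

/-- The row word for inner label `t`: `(t,1), (t,2), …, (t,U)`. -/
def rowW (t U : ℕ) : List (ℕ × ℕ) := (List.range U).map (fun i => (t, i + 1))

/-- The column word for outer label `u`: `(1,u), (2,u), …, (m,u)`. -/
def colW (u m : ℕ) : List (ℕ × ℕ) := (List.range m).map (fun i => (i + 1, u))

/-- The word of the first infusion: rows for `t = m` down to `1`. -/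
def Aword : ℕ → ℕ → List (ℕ × ℕ)
  | 0, _ => []
  | m + 1, U => rowW (m + 1) U ++ Aword m U

/-- The word of the second infusion: columns for `u = U` down to `1`. -/
def Bword : ℕ → ℕ → List (ℕ × ℕ)
  | _, 0 => []
  | m, U + 1 => colW (U + 1) m ++ Bword m U

lemma mem_rowW {t U : ℕ} {p : ℕ × ℕ} (h : p ∈ rowW t U) :
    p.1 = t ∧ 1 ≤ p.2 ∧ p.2 ≤ U := by
  simp only [rowW, List.mem_map, List.mem_range] at h
  obtain ⟨i, hi, rfl⟩ := h
  exact ⟨rfl, Nat.le_add_left _ _, hi⟩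

lemma mem_colW {u m : ℕ} {p : ℕ × ℕ} (h : p ∈ colW u m) :
    p.2 = u ∧ 1 ≤ p.1 ∧ p.1 ≤ m := by
  simp only [colW, List.mem_map, List.mem_range] at h
  obtain ⟨i, hi, rfl⟩ := h
  exact ⟨rfl, Nat.le_add_left _ _, hi⟩

lemma mem_Bword {m U : ℕ} {p : ℕ × ℕ} (h : p ∈ Bword m U) :
    1 ≤ p.1 ∧ p.1 ≤ m ∧ 1 ≤ p.2 ∧ p.2 ≤ U := by
  induction U with
  | zero => cases h
  | succ U ih =>
    rw [Bword, List.mem_append] at h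
    rcases h with h | h
    · obtain ⟨h1, h2, h3⟩ := mem_colW h
      exact ⟨h2, h3, by omega, by omega⟩
    · obtain ⟨h1, h2, h3, h4⟩ := ih h
      exact ⟨h1, h2, h3, by omega⟩

/-- `B(m+1,U)` equals `B(m,U)` followed by the switches `(m+1,U),…,(m+1,1)`. -/
lemma Bword_succ_left (m U : ℕ) (c : Config) :
    applyW (Bword (m + 1) U) c =
      applyW ((rowW (m + 1) U).reverse) (applyW (Bword m U) c) := by
  induction U generalizing c with
  | zero => rfl
  | succ U ih =>
    have hcol : colW (U + 1) (m + 1) = colW (U + 1) m ++ [(m + 1, U + 1)] := by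
      simp [colW, List.range_succ]
    have hrow : (rowW (m + 1) (U + 1)).reverse
        = (m + 1, U + 1) :: (rowW (m + 1) U).reverse := by
      simp [rowW, List.range_succ]
    show applyW (colW (U + 1) (m + 1) ++ Bword (m + 1) U) c = _
    rw [hcol, applyW_append, applyW_append, applyW_cons, applyW_nil, ih, hrow,
      applyW_cons]
    show _ = applyW ((rowW (m + 1) U).reverse)
      (sigma (m + 1) (U + 1) (applyW (colW (U + 1) m ++ Bword m U) c))
    rw [applyW_append]
    refine congrArg (applyW ((rowW (m + 1) U).reverse)) ?_
    exact applyW_comm_single (m + 1, U + 1) (Bword m U)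
      (fun p hp => by obtain ⟨h1, h2, h3, h4⟩ := mem_Bword hp; exact ⟨by omega, by omega⟩)
      (applyW (colW (U + 1) m) c)

/-- The main word identity: the second infusion's word undoes the first's. -/
lemma Bword_Aword (m U : ℕ) (c : Config) :
    applyW (Bword m U) (applyW (Aword m U) c) = c := by
  induction m generalizing c with
  | zero =>
    induction U with
    | zero => rfl
    | succ U ih => exact ih
  | succ m ih =>
    rw [Aword, applyW_append, Bword_succ_left, ih, applyW_reverse]



lemma adjB_symm {a b : Box} (h : adjB a b) : adjB b a := by
  unfold adjB at *; omega

lemma adjB_irrefl (a : Box) : ¬ adjB a a := by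
  unfold adjB; omega

/-- No two distinct boxes are adjacent. -/
def NoAdj (A : Finset Box) : Prop :=
  ∀ a ∈ A, ∀ b ∈ A, a ≠ b → ¬ adjB a b

/-- Boxes with equal entries are non-adjacent. -/
def Good (dom : Finset Box) (f : Box → ℕ) : Prop :=
  ∀ a ∈ dom, ∀ b ∈ dom, f a = f b → a ≠ b → ¬ adjB a b

noncomputable def Sfin (dots dom : Finset Box) (f : Box → ℕ) (i : ℕ) : Finset Box :=
  dots ∪ dom.filter (fun b => f b = i)

def swF (dots dom : Finset Box) (f : Box → ℕ) (i : ℕ) (b : Box) : Prop :=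
  ∃ b' ∈ Sfin dots dom f i, b' ≠ b ∧ conn (Sfin dots dom f i) b b'

lemma mem_switchStep_fst {dots dom : Finset Box} {f : Box → ℕ} {i : ℕ} {b : Box} :
    b ∈ (switchStep (dots, dom, f) i).1 ↔
      (b ∈ dom ∧ f b = i ∧ swF dots dom f i b) ∨ (b ∈ dots ∧ ¬ swF dots dom f i b) := by
  simp only [switchStep, swF, Sfin, mem_union, mem_filter]

lemma mem_switchStep_snd {dots dom : Finset Box} {f : Box → ℕ} {i : ℕ} {b : Box} :
    b ∈ (switchStep (dots, dom, f) i).2.1 ↔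
      (b ∈ dom ∧ ¬ (f b = i ∧ swF dots dom f i b)) ∨ (b ∈ dots ∧ swF dots dom f i b) := by
  simp only [switchStep, swF, Sfin, mem_union, mem_filter]

lemma switchStep_f_pos {dots dom : Finset Box} {f : Box → ℕ} {i : ℕ} {b : Box}
    (h : b ∈ dots ∧ swF dots dom f i b) : (switchStep (dots, dom, f) i).2.2 b = i := by
  simp only [switchStep, swF, Sfin] at *
  rw [if_pos h]

lemma switchStep_f_neg {dots dom : Finset Box} {f : Box → ℕ} {i : ℕ} {b : Box}
    (h : ¬ (b ∈ dots ∧ swF dots dom f i b)) : (switchStep (dots, dom, f) i).2.2 b = f b := by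
  simp only [switchStep, swF, Sfin] at *
  rw [if_neg h]

lemma mem_Sfin {dots dom : Finset Box} {f : Box → ℕ} {i : ℕ} {b : Box} :
    b ∈ Sfin dots dom f i ↔ b ∈ dots ∨ (b ∈ dom ∧ f b = i) := by
  simp [Sfin, mem_union, mem_filter]

/-- Adjacent members of the active set are both switched. -/
lemma swF_of_adj {dots dom : Finset Box} {f : Box → ℕ} {i : ℕ} {a b : Box}
    (ha : a ∈ Sfin dots dom f i) (hb : b ∈ Sfin dots dom f i) (hadj : adjB a b) :
    swF dots dom f i a := by
  have hne : b ≠ a := by rintro rfl; exact adjB_irrefl _ hadj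
  exact ⟨b, hb, hne, Relation.ReflTransGen.single ⟨ha, hb, hadj⟩⟩

/-- A switched box has a switched neighbour in the active set. -/
lemma swF_neighbor {dots dom : Finset Box} {f : Box → ℕ} {i : ℕ} {b : Box}
    (hb : swF dots dom f i b) :
    ∃ x ∈ Sfin dots dom f i, adjB b x ∧ swF dots dom f i x := by
  obtain ⟨b', hb', hne, hconn⟩ := hb
  rcases Relation.ReflTransGen.cases_head hconn with h | ⟨x, ⟨hbS, hxS, hadj⟩, _⟩
  · exact absurd h.symm hne
  · exact ⟨x, hxS, hadj, swF_of_adj hxS hbS (adjB_symm hadj)⟩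

lemma inv_switch (dots dom : Finset Box) (f : Box → ℕ) (i : ℕ)
    (hdisj : Disjoint dots dom) (hdots : NoAdj dots) (hgood : Good dom f) :
    Disjoint (switchStep (dots, dom, f) i).1 (switchStep (dots, dom, f) i).2.1 ∧
    (switchStep (dots, dom, f) i).1 ∪ (switchStep (dots, dom, f) i).2.1 = dots ∪ dom ∧
    NoAdj (switchStep (dots, dom, f) i).1 ∧
    Good (switchStep (dots, dom, f) i).2.1 (switchStep (dots, dom, f) i).2.2 ∧
    (∀ v, (∃ b ∈ dom, f b = v) →
      ∃ b ∈ (switchStep (dots, dom, f) i).2.1, (switchStep (dots, dom, f) i).2.2 b = v) ∧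
    (∀ v, (∃ b ∈ (switchStep (dots, dom, f) i).2.1, (switchStep (dots, dom, f) i).2.2 b = v) →
      ∃ b ∈ dom, f b = v) ∧
    (dots.Nonempty → (switchStep (dots, dom, f) i).1.Nonempty) := by
  have hdd : ∀ b, b ∈ dots → b ∈ dom → False := fun b h1 h2 =>
    (Finset.disjoint_left.mp hdisj) h1 h2
  refine ⟨?_, ?_, ?_, ?_, ?_, ?_, ?_⟩
  · -- disjointness
    rw [Finset.disjoint_left]
    intro b h1 h2
    rw [mem_switchStep_fst] at h1
    rw [mem_switchStep_snd] at h2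
    rcases h1 with ⟨hb, hfi, hsw⟩ | ⟨hb, hsw⟩ <;> rcases h2 with ⟨hb', hn⟩ | ⟨hb', hsw'⟩
    · exact hn ⟨hfi, hsw⟩
    · exact hdd b hb' hb
    · exact hdd b hb hb'
    · exact hsw hsw'
  · -- union
    ext b
    rw [mem_union, mem_switchStep_fst, mem_switchStep_snd, mem_union]
    by_cases hsw : swF dots dom f i b <;> by_cases hfi : f b = i <;> tauto
  · -- NoAdj of new dots
    intro a ha b hb hne hadj
    rw [mem_switchStep_fst] at ha hb
    rcases ha with ⟨haD, hfa, hswa⟩ | ⟨haD, hswa⟩ <;>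
      rcases hb with ⟨hbD, hfb, hswb⟩ | ⟨hbD, hswb⟩
    · exact hgood a haD b hbD (hfa.trans hfb.symm) hne hadj
    · exact hswb (swF_of_adj (mem_Sfin.mpr (Or.inl hbD))
        (mem_Sfin.mpr (Or.inr ⟨haD, hfa⟩)) (adjB_symm hadj))
    · exact hswa (swF_of_adj (mem_Sfin.mpr (Or.inl haD))
        (mem_Sfin.mpr (Or.inr ⟨hbD, hfb⟩)) hadj)
    · exact hswa (swF_of_adj (mem_Sfin.mpr (Or.inl haD)) (mem_Sfin.mpr (Or.inl hbD)) hadj)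
  · -- Good of new tableau
    intro a ha b hb hfab hne hadj
    rw [mem_switchStep_snd] at ha hb
    rcases ha with ⟨haD, hna⟩ | ⟨haD, hswa⟩ <;> rcases hb with ⟨hbD, hnb⟩ | ⟨hbD, hswb⟩
    · have ha' : (switchStep (dots, dom, f) i).2.2 a = f a :=
        switchStep_f_neg (fun h => hdd a h.1 haD)
      have hb' : (switchStep (dots, dom, f) i).2.2 b = f b :=
        switchStep_f_neg (fun h => hdd b h.1 hbD)
      exact hgood a haD b hbD (by rw [← ha', ← hb', hfab]) hne hadj
    · -- a in dom (unswitched), b a switched dot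
      have ha' : (switchStep (dots, dom, f) i).2.2 a = f a :=
        switchStep_f_neg (fun h => hdd a h.1 haD)
      have hb' : (switchStep (dots, dom, f) i).2.2 b = i := switchStep_f_pos ⟨hbD, hswb⟩
      have hfa : f a = i := by rw [← ha', hfab, hb']
      exact hna ⟨hfa, swF_of_adj (mem_Sfin.mpr (Or.inr ⟨haD, hfa⟩))
        (mem_Sfin.mpr (Or.inl hbD)) hadj⟩
    · have hb' : (switchStep (dots, dom, f) i).2.2 b = f b :=
        switchStep_f_neg (fun h => hdd b h.1 hbD)
      have ha' : (switchStep (dots, dom, f) i).2.2 a = i := switchStep_f_pos ⟨haD, hswa⟩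
      have hfb : f b = i := by rw [← hb', ← hfab, ha']
      exact hnb ⟨hfb, swF_of_adj (mem_Sfin.mpr (Or.inr ⟨hbD, hfb⟩))
        (mem_Sfin.mpr (Or.inl haD)) (adjB_symm hadj)⟩
    · exact hdots a haD b hbD hne hadj
  · -- values survive
    rintro v ⟨b, hb, rfl⟩
    by_cases hsw : f b = i ∧ swF dots dom f i b
    · -- the value i survives via a neighbouring dot
      obtain ⟨x, hxS, hadj, hswx⟩ := swF_neighbor hsw.2
      rcases mem_Sfin.mp hxS with hx | ⟨hx, hfx⟩
      · refine ⟨x, mem_switchStep_snd.mpr (Or.inr ⟨hx, hswx⟩), ?_⟩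
        rw [switchStep_f_pos ⟨hx, hswx⟩, hsw.1]
      · exact absurd hadj (hgood b hb x hx (hsw.1.trans hfx.symm)
          (fun h => adjB_irrefl b (h ▸ hadj)) )
    · refine ⟨b, mem_switchStep_snd.mpr (Or.inl ⟨hb, hsw⟩), ?_⟩
      exact switchStep_f_neg (fun h => hdd b h.1 hb)
  · -- no new values
    rintro v ⟨b, hb, rfl⟩
    rw [mem_switchStep_snd] at hb
    rcases hb with ⟨hb, hn⟩ | ⟨hb, hsw⟩
    · exact ⟨b, hb, (switchStep_f_neg (fun h => hdd b h.1 hb)).symm⟩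
    · rw [switchStep_f_pos ⟨hb, hsw⟩]
      obtain ⟨x, hxS, hadj, hswx⟩ := swF_neighbor hsw
      rcases mem_Sfin.mp hxS with hx | ⟨hx, hfx⟩
      · exact absurd hadj (hdots b hb x hx (fun h => adjB_irrefl b (h ▸ hadj)))
      · exact ⟨x, hx, hfx⟩
  · -- dots stay nonempty
    rintro ⟨d, hd⟩
    by_cases hsw : swF dots dom f i d
    · obtain ⟨x, hxS, hadj, hswx⟩ := swF_neighbor hsw
      rcases mem_Sfin.mp hxS with hx | ⟨hx, hfx⟩
      · exact absurd hadj (hdots d hd x hx (fun h => adjB_irrefl d (h ▸ hadj)))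
      · exact ⟨x, mem_switchStep_fst.mpr (Or.inl ⟨hx, hfx, hswx⟩)⟩
    · exact ⟨d, mem_switchStep_fst.mpr (Or.inr ⟨hd, hsw⟩)⟩

lemma conn_iff_connS (S : Finset Box) (a b : Box) : conn S a b ↔ connS (↑S) a b := by
  constructor <;> intro h <;>
    exact Relation.ReflTransGen.mono (fun x y hxy => by
      simpa using hxy) _ _ h

lemma bool_pair_ne (s : Bool) (v w : ℕ) : some ((s, v) : Bool × ℕ) ≠ some ((!s, w)) := by
  cases s <;> simp

/-- The switched labels, parametrized by the side `s` carried by the dots. -/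
lemma flipA (s : Bool) (tc i : ℕ) :
    flipLab (cond s tc i) (cond s i tc) (some (s, tc)) = some (!s, i) := by
  cases s <;> simp [flipLab]

lemma flipB (s : Bool) (tc i : ℕ) :
    flipLab (cond s tc i) (cond s i tc) (some (!s, i)) = some (s, tc) := by
  cases s <;> simp [flipLab]

lemma mem_Sset_iff (s : Bool) (tc i : ℕ) (c : Config) (b : Box) :
    b ∈ Sset (cond s tc i) (cond s i tc) c ↔
      c b = some (s, tc) ∨ c b = some (!s, i) := by
  cases s <;> simp [mem_Sset] <;> tauto

/-- Simulation of one `switchStep` by one `sigma` switch on combined configurations. -/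
lemma sim_switch (s : Bool) (tc i : ℕ) (dots dom : Finset Box) (f : Box → ℕ) (c : Config)
    (hdisj : Disjoint dots dom)
    (hdots : ∀ b ∈ dots, c b = some (s, tc))
    (hdom : ∀ b ∈ dom, c b = some (!s, f b))
    (hamb : ∀ b, b ∉ dots → b ∉ dom → c b ≠ some (s, tc) ∧ ∀ v, c b ≠ some (!s, v)) :
    (∀ b ∈ (switchStep (dots, dom, f) i).1,
        sigma (cond s tc i) (cond s i tc) c b = some (s, tc)) ∧
    (∀ b ∈ (switchStep (dots, dom, f) i).2.1,
        sigma (cond s tc i) (cond s i tc) c b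
          = some (!s, (switchStep (dots, dom, f) i).2.2 b)) ∧
    (∀ b, b ∉ dots → b ∉ dom → sigma (cond s tc i) (cond s i tc) c b = c b) := by
  have hdd : ∀ b, b ∈ dots → b ∈ dom → False := fun b h1 h2 =>
    (Finset.disjoint_left.mp hdisj) h1 h2
  have hS : Sset (cond s tc i) (cond s i tc) c = ↑(Sfin dots dom f i) := by
    ext b
    rw [mem_Sset_iff s tc i c b, Finset.mem_coe, mem_Sfin]
    constructor
    · rintro (h | h)
      · by_cases hb : b ∈ dots
        · exact Or.inl hb
        · by_cases hb' : b ∈ dom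
          · exact absurd (h ▸ (hdom b hb').symm) (fun hh => bool_pair_ne s tc (f b) hh.symm)
          · exact absurd h (hamb b hb hb').1
      · by_cases hb : b ∈ dots
        · exact absurd (h ▸ (hdots b hb).symm) (bool_pair_ne s tc i)
        · by_cases hb' : b ∈ dom
          · have := hdom b hb'
            rw [this] at h
            have : f b = i := by simpa using h
            exact Or.inr ⟨hb', this⟩
          · exact absurd h ((hamb b hb hb').2 i)
    · rintro (h | ⟨h, hfb⟩)
      · exact Or.inl (hdots b h)
      · exact Or.inr (by rw [hdom b h, hfb])
  have hsw : ∀ b, swS (cond s tc i) (cond s i tc) c b ↔ swF dots dom f i b := by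
    intro b
    unfold swS swF
    rw [hS]
    constructor
    · rintro ⟨b', hb', hne, hconn⟩
      exact ⟨b', by simpa using hb', hne, (conn_iff_connS _ _ _).mpr hconn⟩
    · rintro ⟨b', hb', hne, hconn⟩
      exact ⟨b', by simpa using hb', hne, (conn_iff_connS _ _ _).mp hconn⟩
  have hmemS : ∀ b, b ∈ Sset (cond s tc i) (cond s i tc) c ↔ b ∈ Sfin dots dom f i := by
    intro b; rw [hS, Finset.mem_coe]
  refine ⟨?_, ?_, ?_⟩
  · intro b hb
    rw [mem_switchStep_fst] at hb
    rcases hb with ⟨hb, hfi, hswb⟩ | ⟨hb, hswb⟩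
    · rw [sigma_apply, if_pos ⟨(hmemS b).mpr (mem_Sfin.mpr (Or.inr ⟨hb, hfi⟩)),
        (hsw b).mpr hswb⟩, hdom b hb, hfi, flipB]
    · rw [sigma_apply, if_neg (fun h => hswb ((hsw b).mp h.2)), hdots b hb]
  · intro b hb
    rw [mem_switchStep_snd] at hb
    rcases hb with ⟨hb, hn⟩ | ⟨hb, hswb⟩
    · rw [switchStep_f_neg (fun h => hdd b h.1 hb)]
      by_cases hfi : f b = i
      · rw [sigma_apply, if_neg (fun h => hn ⟨hfi, (hsw b).mp h.2⟩), hdom b hb]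
      · rw [sigma_apply, if_neg (fun h => hfi ?_), hdom b hb]
        rcases mem_Sfin.mp ((hmemS b).mp h.1) with hd | ⟨_, hfb⟩
        · exact absurd hd (fun hd => hdd b hd hb)
        · exact hfb
    · rw [switchStep_f_pos ⟨hb, hswb⟩, sigma_apply,
        if_pos ⟨(hmemS b).mpr (mem_Sfin.mpr (Or.inl hb)), (hsw b).mpr hswb⟩,
        hdots b hb, flipA]
  · intro b hb1 hb2
    rw [sigma_apply, if_neg (fun h => ?_)]
    rcases mem_Sfin.mp ((hmemS b).mp h.1) with hd | ⟨hd, _⟩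
    · exact hb1 hd
    · exact hb2 hd

/-- The switch word corresponding to a `KState` slide, on side `s` with dot label `tc`. -/
def wordS (s : Bool) (tc m : ℕ) : List (ℕ × ℕ) :=
  (List.range m).map (fun i => (cond s tc (i + 1), cond s (i + 1) tc))

lemma wordS_true (tc m : ℕ) : wordS true tc m = rowW tc m := rfl

lemma wordS_false (tc m : ℕ) : wordS false tc m = colW tc m := rfl

lemma wordS_succ (s : Bool) (tc m : ℕ) :
    wordS s tc (m + 1) = wordS s tc m ++ [(cond s tc (m + 1), cond s (m + 1) tc)] := by
  simp [wordS, List.range_succ]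

lemma KState_succ (xs dom : Finset Box) (f : Box → ℕ) (m : ℕ) :
    KState xs dom f (m + 1) = switchStep (KState xs dom f m) (m + 1) := by
  unfold KState
  rw [List.range_succ, List.foldl_append]
  rfl

lemma KState_zero (xs dom : Finset Box) (f : Box → ℕ) :
    KState xs dom f 0 = (xs, dom, f) := rfl

/-- Full simulation and invariance through a `KState` slide. -/
lemma sim_KState (s : Bool) (tc : ℕ) (m : ℕ) (dots dom : Finset Box) (f : Box → ℕ)
    (c : Config)
    (hdisj : Disjoint dots dom) (hdots : NoAdj dots) (hgood : Good dom f)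
    (hcd : ∀ b ∈ dots, c b = some (s, tc))
    (hcm : ∀ b ∈ dom, c b = some (!s, f b))
    (hamb : ∀ b, b ∉ dots → b ∉ dom → c b ≠ some (s, tc) ∧ ∀ v, c b ≠ some (!s, v)) :
    Disjoint (KState dots dom f m).1 (KState dots dom f m).2.1 ∧
    (KState dots dom f m).1 ∪ (KState dots dom f m).2.1 = dots ∪ dom ∧
    NoAdj (KState dots dom f m).1 ∧
    Good (KState dots dom f m).2.1 (KState dots dom f m).2.2 ∧
    (∀ v, (∃ b ∈ dom, f b = v) ↔
      (∃ b ∈ (KState dots dom f m).2.1, (KState dots dom f m).2.2 b = v)) ∧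
    (dots.Nonempty → (KState dots dom f m).1.Nonempty) ∧
    (∀ b ∈ (KState dots dom f m).1, applyW (wordS s tc m) c b = some (s, tc)) ∧
    (∀ b ∈ (KState dots dom f m).2.1,
      applyW (wordS s tc m) c b = some (!s, (KState dots dom f m).2.2 b)) ∧
    (∀ b, b ∉ dots → b ∉ dom → applyW (wordS s tc m) c b = c b) := by
  induction m with
  | zero =>
    rw [KState_zero]
    exact ⟨hdisj, rfl, hdots, hgood, fun v => Iff.rfl, fun h => h, hcd, hcm,
      fun b _ _ => rfl⟩
  | succ m ih =>
    obtain ⟨ih1, ih2, ih3, ih4, ih5, ih6, ih7, ih8, ih9⟩ := ih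
    set st := KState dots dom f m with hst
    have hsteq : (st.1, st.2.1, st.2.2) = st := rfl
    set c' := applyW (wordS s tc m) c with hc'
    have hamb' : ∀ b, b ∉ st.1 → b ∉ st.2.1 →
        c' b ≠ some (s, tc) ∧ ∀ v, c' b ≠ some (!s, v) := by
      intro b hb1 hb2
      have hbu : b ∉ dots ∪ dom := by
        rw [← ih2]; simp [hb1, hb2]
      rw [mem_union] at hbu
      push_neg at hbu
      rw [ih9 b hbu.1 hbu.2]
      exact hamb b hbu.1 hbu.2
    have hinv := inv_switch st.1 st.2.1 st.2.2 (m + 1) ih1 ih3 ih4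
    have hsim := sim_switch s tc (m + 1) st.1 st.2.1 st.2.2 c' ih1 ih7 ih8 hamb'
    rw [hsteq] at hinv hsim
    rw [KState_succ, ← hst, wordS_succ, applyW_append, applyW_cons, applyW_nil, ← hc']
    obtain ⟨v1, v2, v3, v4, v5, v6, v7⟩ := hinv
    obtain ⟨w1, w2, w3⟩ := hsim
    refine ⟨v1, by rw [v2, ih2], v3, v4, ?_, fun h => v7 (ih6 h), w1, w2, ?_⟩
    · intro v
      rw [ih5 v]
      exact ⟨fun h => v5 v h, fun h => v6 v h⟩
    · intro b hb1 hb2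
      have hbu : b ∉ dots ∪ dom := by simp [hb1, hb2]
      rw [← ih2, mem_union] at hbu
      push_neg at hbu
      rw [w3 b hbu.1 hbu.2]
      exact ih9 b hb1 hb2



lemma infusionStep_eq
    (st : (Finset Box × (Box → ℕ)) × (Finset Box × (Box → ℕ)) × (Finset Box × (Box → ℕ))) :
    infusionStep st =
      ((st.1.1 \ st.1.1.filter (fun b => st.1.2 b = maxEntry st.1.1 st.1.2), st.1.2),
       ((KState (st.1.1.filter (fun b => st.1.2 b = maxEntry st.1.1 st.1.2)) st.2.1.1 st.2.1.2
          (maxEntry st.2.1.1 st.2.1.2)).2.1,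
        (KState (st.1.1.filter (fun b => st.1.2 b = maxEntry st.1.1 st.1.2)) st.2.1.1 st.2.1.2
          (maxEntry st.2.1.1 st.2.1.2)).2.2),
       (st.2.2.1 ∪ (KState (st.1.1.filter (fun b => st.1.2 b = maxEntry st.1.1 st.1.2)) st.2.1.1
          st.2.1.2 (maxEntry st.2.1.1 st.2.1.2)).1,
        fun b => if b ∈ (KState (st.1.1.filter (fun b => st.1.2 b = maxEntry st.1.1 st.1.2))
            st.2.1.1 st.2.1.2 (maxEntry st.2.1.1 st.2.1.2)).1
          then maxEntry st.1.1 st.1.2 else st.2.2.2 b)) := rfl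

lemma maxEntry_eq (dom : Finset Box) (f : Box → ℕ) (U : ℕ)
    (h1 : ∀ b ∈ dom, f b ≤ U) (h2 : U = 0 ∨ ∃ b ∈ dom, f b = U) :
    maxEntry dom f = U := by
  rcases h2 with rfl | ⟨b, hb, hfb⟩
  · exact Nat.le_antisymm (Finset.sup_le h1) (Nat.zero_le _)
  · exact Nat.le_antisymm (Finset.sup_le h1) (hfb ▸ Finset.le_sup hb)

/-- The full invariant carried through one infusion pass.  `s` is the side of the
sliding (inner) labels in the combined configuration, `Td0, Tf0` the original inner
tableau with maximal entry `M`, `U` the bound for outer labels, `k` the number of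
steps performed, `st` the current state and `c` the current combined configuration. -/
def InvP (s : Bool) (Td0 : Finset Box) (Tf0 : Box → ℕ) (M U k : ℕ)
    (st : (Finset Box × (Box → ℕ)) × (Finset Box × (Box → ℕ)) × (Finset Box × (Box → ℕ)))
    (c : Config) : Prop :=
  st.1.1 = Td0.filter (fun b => Tf0 b ≤ M - k) ∧
  st.1.2 = Tf0 ∧
  Disjoint st.1.1 st.2.1.1 ∧ Disjoint st.1.1 st.2.2.1 ∧ Disjoint st.2.1.1 st.2.2.1 ∧
  Good st.2.1.1 st.2.1.2 ∧
  (∀ v, (∃ b ∈ st.2.1.1, st.2.1.2 b = v) ↔ (1 ≤ v ∧ v ≤ U)) ∧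
  Good st.2.2.1 st.2.2.2 ∧
  (∀ b ∈ st.2.2.1, M - k < st.2.2.2 b ∧ st.2.2.2 b ≤ M) ∧
  (∀ v, M - k < v → v ≤ M → ∃ b ∈ st.2.2.1, st.2.2.2 b = v) ∧
  (∀ b ∈ st.1.1, c b = some (s, Tf0 b)) ∧
  (∀ b ∈ st.2.1.1, c b = some (!s, st.2.1.2 b)) ∧
  (∀ b ∈ st.2.2.1, c b = some (s, st.2.2.2 b)) ∧
  (∀ b, b ∉ st.1.1 → b ∉ st.2.1.1 → b ∉ st.2.2.1 → c b = none)

lemma inv_step (s : Bool) (Td0 : Finset Box) (Tf0 : Box → ℕ) (M U k : ℕ)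
    (st : (Finset Box × (Box → ℕ)) × (Finset Box × (Box → ℕ)) × (Finset Box × (Box → ℕ)))
    (c : Config)
    (hk : k < M)
    (hTgood : Good Td0 Tf0)
    (hTpos : ∀ b ∈ Td0, 1 ≤ Tf0 b ∧ Tf0 b ≤ M)
    (hTsurj : ∀ v, 1 ≤ v → v ≤ M → ∃ b ∈ Td0, Tf0 b = v)
    (hI : InvP s Td0 Tf0 M U k st c) :
    InvP s Td0 Tf0 M U (k + 1) (infusionStep st) (applyW (wordS s (M - k) U) c) := by
  obtain ⟨h1, h2, h3, h4, h5, h6, h7, h8, h9, h10, h11, h12, h13, h14⟩ := hI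
  have hMk1 : 1 ≤ M - k := by omega
  -- the current maximal entry of the inner tableau
  have hmax : maxEntry st.1.1 st.1.2 = M - k := by
    apply maxEntry_eq
    · intro b hb
      rw [h1, mem_filter] at hb
      rw [h2]
      exact hb.2
    · right
      obtain ⟨b, hb, hfb⟩ := hTsurj (M - k) hMk1 (by omega)
      exact ⟨b, by rw [h1, mem_filter]; exact ⟨hb, by omega⟩, by rw [h2]; exact hfb⟩
  -- the set of boxes carrying it
  have hxs : st.1.1.filter (fun b => st.1.2 b = maxEntry st.1.1 st.1.2)
      = Td0.filter (fun b => Tf0 b = M - k) := by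
    rw [hmax, h1, h2]
    ext b
    simp only [mem_filter]
    constructor
    · rintro ⟨⟨hb, _⟩, hfb⟩; exact ⟨hb, hfb⟩
    · rintro ⟨hb, hfb⟩; exact ⟨⟨hb, by omega⟩, hfb⟩
  set xs := Td0.filter (fun b => Tf0 b = M - k) with hxsdef
  have hxs_ne : xs.Nonempty := by
    obtain ⟨b, hb, hfb⟩ := hTsurj (M - k) hMk1 (by omega)
    exact ⟨b, by rw [hxsdef, mem_filter]; exact ⟨hb, hfb⟩⟩
  have hxs_sub1 : xs ⊆ st.1.1 := by
    rw [h1]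
    intro b hb
    rw [hxsdef, mem_filter] at hb
    rw [mem_filter]
    exact ⟨hb.1, by omega⟩
  -- the current maximal entry of the outer tableau
  have hmaxU : maxEntry st.2.1.1 st.2.1.2 = U := by
    apply maxEntry_eq
    · intro b hb
      exact ((h7 (st.2.1.2 b)).mp ⟨b, hb, rfl⟩).2
    · by_cases hU : U = 0
      · exact Or.inl hU
      · exact Or.inr ((h7 U).mpr ⟨by omega, le_refl U⟩)
  -- hypotheses of the `KState` simulation
  have hdisj_xs : Disjoint xs st.2.1.1 :=
    Finset.disjoint_of_subset_left hxs_sub1 h3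
  have hdots : NoAdj xs := by
    intro a ha b hb hne hadj
    rw [hxsdef, mem_filter] at ha hb
    exact hTgood a ha.1 b hb.1 (ha.2.trans hb.2.symm) hne hadj
  have hcd : ∀ b ∈ xs, c b = some (s, M - k) := by
    intro b hb
    rw [h11 b (hxs_sub1 hb)]
    rw [hxsdef, mem_filter] at hb
    rw [hb.2]
  have hamb : ∀ b, b ∉ xs → b ∉ st.2.1.1 →
      c b ≠ some (s, M - k) ∧ ∀ v, c b ≠ some (!s, v) := by
    intro b hb1 hb2
    by_cases hbT : b ∈ st.1.1
    · rw [h11 b hbT]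
      have hbf : Tf0 b ≠ M - k := by
        intro hf
        exact hb1 (by
          rw [hxsdef, mem_filter]
          rw [h1, mem_filter] at hbT
          exact ⟨hbT.1, hf⟩)
      exact ⟨by simpa using (fun h => hbf h), fun v => bool_pair_ne s (Tf0 b) v⟩
    · by_cases hbR : b ∈ st.2.2.1
      · rw [h13 b hbR]
        have := (h9 b hbR).1
        refine ⟨?_, fun v => bool_pair_ne s (st.2.2.2 b) v⟩
        simp only [ne_eq, Option.some.injEq, Prod.mk.injEq]
        rintro ⟨-, h⟩
        omega
      · rw [h14 b hbT hb2 hbR]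
        exact ⟨by simp, fun v => by simp⟩
  have hsim := sim_KState s (M - k) U xs st.2.1.1 st.2.1.2 c hdisj_xs hdots h6 hcd h12 hamb
  obtain ⟨s1, s2, s3, s4, s5, s6, s7, s8, s9⟩ := hsim
  set ks := KState xs st.2.1.1 st.2.1.2 U with hksdef
  have hks : KState (st.1.1.filter (fun b => st.1.2 b = maxEntry st.1.1 st.1.2)) st.2.1.1
      st.2.1.2 (maxEntry st.2.1.1 st.2.1.2) = ks := by
    rw [hxs, hmaxU]
  have hstep : infusionStep st =
      ((st.1.1 \ xs, st.1.2), (ks.2.1, ks.2.2),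
       (st.2.2.1 ∪ ks.1, fun b => if b ∈ ks.1 then M - k else st.2.2.2 b)) := by
    rw [infusionStep_eq, hks, hxs, hmax]
  rw [hstep]
  -- elementwise versions of the old and new disjointness facts
  have hd3 : ∀ b, b ∈ st.1.1 → b ∈ st.2.1.1 → False :=
    fun b hb1 hb2 => (Finset.disjoint_left.mp h3) hb1 hb2
  have hd4 : ∀ b, b ∈ st.1.1 → b ∈ st.2.2.1 → False :=
    fun b hb1 hb2 => (Finset.disjoint_left.mp h4) hb1 hb2
  have hd5 : ∀ b, b ∈ st.2.1.1 → b ∈ st.2.2.1 → False :=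
    fun b hb1 hb2 => (Finset.disjoint_left.mp h5) hb1 hb2
  have hd1 : ∀ b, b ∈ ks.1 → b ∈ ks.2.1 → False :=
    fun b hb1 hb2 => (Finset.disjoint_left.mp s1) hb1 hb2
  have hku : ∀ b, b ∈ ks.1 ∨ b ∈ ks.2.1 ↔ b ∈ xs ∨ b ∈ st.2.1.1 := by
    intro b
    have := Finset.ext_iff.mp s2 b
    simpa [mem_union] using this
  have hRk : ∀ b, b ∈ st.2.2.1 → b ∈ ks.1 → False := by
    intro b hb1 hb2
    rcases (hku b).mp (Or.inl hb2) with h | h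
    · exact hd4 b (hxs_sub1 h) hb1
    · exact hd5 b h hb1
  have hRk2 : ∀ b, b ∈ st.2.2.1 → b ∈ ks.2.1 → False := by
    intro b hb1 hb2
    rcases (hku b).mp (Or.inr hb2) with h | h
    · exact hd4 b (hxs_sub1 h) hb1
    · exact hd5 b h hb1
  have hTk2 : ∀ b, b ∈ st.1.1 \ xs → b ∈ ks.2.1 → False := by
    intro b hb1 hb2
    rw [mem_sdiff] at hb1
    rcases (hku b).mp (Or.inr hb2) with h | h
    · exact hb1.2 h
    · exact hd3 b hb1.1 h
  have hTk1 : ∀ b, b ∈ st.1.1 \ xs → b ∈ ks.1 → False := by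
    intro b hb1 hb2
    rw [mem_sdiff] at hb1
    rcases (hku b).mp (Or.inl hb2) with h | h
    · exact hb1.2 h
    · exact hd3 b hb1.1 h
  refine ⟨?_, h2, ?_, ?_, ?_, s4, ?_, ?_, ?_, ?_, ?_, s8, ?_, ?_⟩
  · -- new inner domain
    show st.1.1 \ xs = Td0.filter (fun b => Tf0 b ≤ M - (k + 1))
    rw [h1]
    ext b
    simp only [mem_sdiff, mem_filter, hxsdef]
    constructor
    · rintro ⟨⟨hb, hle⟩, hne⟩
      refine ⟨hb, ?_⟩
      have h' : ¬ (b ∈ Td0 ∧ Tf0 b = M - k) := by simpa using hne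
      have h'' : Tf0 b ≠ M - k := fun h => h' ⟨hb, h⟩
      omega
    · rintro ⟨hb, hle⟩
      have h1le : Tf0 b ≤ M - k := by omega
      have hne : Tf0 b ≠ M - k := by omega
      exact ⟨⟨hb, h1le⟩, by simp [hb, hne]⟩
  · -- disjoint inner/outer
    rw [Finset.disjoint_left]
    intro b hb1 hb2
    exact hTk2 b hb1 hb2
  · -- disjoint inner/record
    rw [Finset.disjoint_left]
    intro b hb1 hb2
    rw [mem_union] at hb2
    rw [mem_sdiff] at hb1
    rcases hb2 with h | h
    · exact hd4 b hb1.1 h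
    · exact hTk1 b (mem_sdiff.mpr hb1) h
  · -- disjoint outer/record
    rw [Finset.disjoint_left]
    intro b hb1 hb2
    rw [mem_union] at hb2
    rcases hb2 with h | h
    · exact hRk2 b h hb1
    · exact hd1 b h hb1
  · -- outer value set
    intro v
    rw [← s5 v]
    exact h7 v
  · -- record Good
    intro a ha b hb hfab hne hadj
    replace ha : a ∈ st.2.2.1 ∪ ks.1 := ha
    replace hb : b ∈ st.2.2.1 ∪ ks.1 := hb
    rw [mem_union] at ha hb
    have hfab' : (if a ∈ ks.1 then M - k else st.2.2.2 a)
        = (if b ∈ ks.1 then M - k else st.2.2.2 b) := hfab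
    rcases ha with ha | ha <;> rcases hb with hb | hb
    · rw [if_neg (fun h => hRk a ha h), if_neg (fun h => hRk b hb h)] at hfab'
      exact h8 a ha b hb hfab' hne hadj
    · rw [if_neg (fun h => hRk a ha h), if_pos hb] at hfab'
      have := (h9 a ha).1
      omega
    · rw [if_pos ha, if_neg (fun h => hRk b hb h)] at hfab'
      have := (h9 b hb).1
      omega
    · exact s3 a ha b hb hne hadj
  · -- record label range
    intro b hb
    show M - (k + 1) < (if b ∈ ks.1 then M - k else st.2.2.2 b) ∧
      (if b ∈ ks.1 then M - k else st.2.2.2 b) ≤ M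
    replace hb : b ∈ st.2.2.1 ∪ ks.1 := hb
    rw [mem_union] at hb
    rcases hb with hb | hb
    · rw [if_neg (fun h => hRk b hb h)]
      have := h9 b hb
      omega
    · rw [if_pos hb]
      omega
  · -- record surjectivity
    intro v hv1 hv2
    by_cases hv : v = M - k
    · obtain ⟨b, hb⟩ := s6 hxs_ne
      refine ⟨b, mem_union_right _ hb, ?_⟩
      show (if b ∈ ks.1 then M - k else st.2.2.2 b) = v
      rw [if_pos hb, hv]
    · have hv1' : M - (k + 1) < v := hv1
      obtain ⟨b, hb, hfb⟩ := h10 v (by omega) hv2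
      refine ⟨b, mem_union_left _ hb, ?_⟩
      show (if b ∈ ks.1 then M - k else st.2.2.2 b) = v
      rw [if_neg (fun h => hRk b hb h), hfb]
  · -- inner labels in config
    intro b hb
    rw [mem_sdiff] at hb
    have hb2 : b ∉ st.2.1.1 := fun h => hd3 b hb.1 h
    show applyW (wordS s (M - k) U) c b = some (s, Tf0 b)
    rw [s9 b hb.2 hb2]
    exact h11 b hb.1
  · -- record labels in config
    intro b hb
    show applyW (wordS s (M - k) U) c b
      = some (s, if b ∈ ks.1 then M - k else st.2.2.2 b)
    replace hb : b ∈ st.2.2.1 ∪ ks.1 := hb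
    rw [mem_union] at hb
    rcases hb with hb | hb
    · have hbx : b ∉ xs := fun h => hd4 b (hxs_sub1 h) hb
      have hbm : b ∉ st.2.1.1 := fun h => hd5 b h hb
      rw [s9 b hbx hbm, if_neg (fun h => hRk b hb h)]
      exact h13 b hb
    · rw [if_pos hb]
      exact s7 b hb
  · -- outside the configuration is empty
    intro b hb1 hb2 hb3
    replace hb3 : b ∉ st.2.2.1 ∪ ks.1 := hb3
    rw [mem_union] at hb3
    push_neg at hb3
    have hb2' : b ∉ ks.2.1 := hb2
    have hxd : b ∉ xs ∧ b ∉ st.2.1.1 := by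
      by_contra h
      push_neg at h
      have : b ∈ xs ∨ b ∈ st.2.1.1 := by tauto
      rcases (hku b).mpr this with h' | h'
      · exact hb3.2 h'
      · exact hb2' h'
    have hbT : b ∉ st.1.1 := by
      intro h
      exact hb1 (mem_sdiff.mpr ⟨h, hxd.1⟩)
    show applyW (wordS s (M - k) U) c b = none
    rw [s9 b hxd.1 hxd.2]
    exact h14 b hbT hxd.2 hb3.1

/-- The concatenated switch word of the first `j` infusion steps. -/
def WApre (s : Bool) (M U : ℕ) : ℕ → List (ℕ × ℕ)
  | 0 => []
  | j + 1 => WApre s M U j ++ wordS s (M - j) U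

lemma inv_iterate (s : Bool) (Td0 : Finset Box) (Tf0 : Box → ℕ) (M U : ℕ)
    (st0 : (Finset Box × (Box → ℕ)) × (Finset Box × (Box → ℕ)) × (Finset Box × (Box → ℕ)))
    (c0 : Config)
    (hTgood : Good Td0 Tf0)
    (hTpos : ∀ b ∈ Td0, 1 ≤ Tf0 b ∧ Tf0 b ≤ M)
    (hTsurj : ∀ v, 1 ≤ v → v ≤ M → ∃ b ∈ Td0, Tf0 b = v)
    (hI0 : InvP s Td0 Tf0 M U 0 st0 c0) (j : ℕ) (hj : j ≤ M) :
    InvP s Td0 Tf0 M U j (infusionStep^[j] st0) (applyW (WApre s M U j) c0) := by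
  induction j with
  | zero => exact hI0
  | succ j ih =>
    rw [Function.iterate_succ_apply', WApre, applyW_append]
    exact inv_step s Td0 Tf0 M U j _ _ (by omega) hTgood hTpos hTsurj (ih (by omega))

lemma WApre_shift (s : Bool) (M U : ℕ) (j : ℕ) (hj : j ≤ M) :
    WApre s (M + 1) U (j + 1) = wordS s (M + 1) U ++ WApre s M U j := by
  induction j with
  | zero => simp [WApre]
  | succ j ih =>
    have hMj : M + 1 - (j + 1) = M - j := by omega
    rw [WApre, ih (by omega), WApre, hMj, List.append_assoc]

lemma WApre_A (M U : ℕ) : WApre true M U M = Aword M U := by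
  induction M with
  | zero => rfl
  | succ M ih =>
    rw [WApre_shift true M U M (le_refl M), ih, Aword, wordS_true]

lemma WApre_B (M U : ℕ) : WApre false U M U = Bword M U := by
  induction U with
  | zero => rfl
  | succ U ih =>
    rw [WApre_shift false U M U (le_refl U), ih, Bword, wordS_false]

lemma good_of_increasing (dom : Finset Box) (f : Box → ℕ) (h : IncreasingOn dom f) :
    Good dom f := by
  intro a ha b hb hfab hne hadj
  obtain ⟨ar, ac⟩ := a
  obtain ⟨br, bc⟩ := b
  rcases hadj with ⟨h1, h2 | h2⟩ | ⟨h1, h2 | h2⟩ <;> simp only at h1 h2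
  · subst h1; subst h2
    exact absurd hfab (Nat.ne_of_lt (h.1 ar ac ha hb))
  · subst h1; subst h2
    exact absurd hfab.symm (Nat.ne_of_lt (h.1 ar bc hb ha))
  · subst h1; subst h2
    exact absurd hfab (Nat.ne_of_lt (h.2 ar ac ha hb))
  · subst h1; subst h2
    exact absurd hfab.symm (Nat.ne_of_lt (h.2 br ac hb ha))



/-- K-infusion is an involution. -/
theorem stmt5 (alpha lam nu : Finset Box) (Tf Uf : Box → ℕ)
    (halpha : IsYoung alpha) (hlam : IsYoung lam) (hnu : IsYoung nu)
    (hal : alpha ⊆ lam) (hln : lam ⊆ nu)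
    (hT : IsIncTab (lam \ alpha) Tf) (hU : IsIncTab (nu \ lam) Uf) :
    (KInfusion (KInfusion (lam \ alpha) Tf (nu \ lam) Uf).1.1
               (KInfusion (lam \ alpha) Tf (nu \ lam) Uf).1.2
               (KInfusion (lam \ alpha) Tf (nu \ lam) Uf).2.1
               (KInfusion (lam \ alpha) Tf (nu \ lam) Uf).2.2).1.1 = lam \ alpha ∧
    (∀ b ∈ lam \ alpha,
      (KInfusion (KInfusion (lam \ alpha) Tf (nu \ lam) Uf).1.1
                 (KInfusion (lam \ alpha) Tf (nu \ lam) Uf).1.2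
                 (KInfusion (lam \ alpha) Tf (nu \ lam) Uf).2.1
                 (KInfusion (lam \ alpha) Tf (nu \ lam) Uf).2.2).1.2 b = Tf b) ∧
    (KInfusion (KInfusion (lam \ alpha) Tf (nu \ lam) Uf).1.1
               (KInfusion (lam \ alpha) Tf (nu \ lam) Uf).1.2
               (KInfusion (lam \ alpha) Tf (nu \ lam) Uf).2.1
               (KInfusion (lam \ alpha) Tf (nu \ lam) Uf).2.2).2.1 = nu \ lam ∧
    (∀ b ∈ nu \ lam,
      (KInfusion (KInfusion (lam \ alpha) Tf (nu \ lam) Uf).1.1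
                 (KInfusion (lam \ alpha) Tf (nu \ lam) Uf).1.2
                 (KInfusion (lam \ alpha) Tf (nu \ lam) Uf).2.1
                 (KInfusion (lam \ alpha) Tf (nu \ lam) Uf).2.2).2.2 b = Uf b) := by
  classical
  obtain ⟨hTinc, hTpos, hTsurj⟩ := hT
  obtain ⟨hUinc, hUpos, hUsurj⟩ := hU
  set Td0 : Finset Box := lam \ alpha with hTd0
  set Ud0 : Finset Box := nu \ lam with hUd0
  set M : ℕ := maxEntry Td0 Tf with hM
  set U : ℕ := maxEntry Ud0 Uf with hU'
  have hdisj0 : ∀ b, b ∈ Td0 → b ∈ Ud0 → False := by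
    intro b hb1 hb2
    rw [hTd0, mem_sdiff] at hb1
    rw [hUd0, mem_sdiff] at hb2
    exact hb2.2 hb1.1
  have hTgood : Good Td0 Tf := good_of_increasing _ _ hTinc
  have hTb : ∀ b ∈ Td0, 1 ≤ Tf b ∧ Tf b ≤ M := fun b hb =>
    ⟨hTpos b hb, Finset.le_sup hb⟩
  have hUgood : Good Ud0 Uf := good_of_increasing _ _ hUinc
  have hUval : ∀ v, (∃ b ∈ Ud0, Uf b = v) ↔ 1 ≤ v ∧ v ≤ U := by
    intro v
    constructor
    · rintro ⟨b, hb, rfl⟩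
      exact ⟨hUpos b hb, Finset.le_sup hb⟩
    · rintro ⟨hv1, hv2⟩
      exact hUsurj v hv1 hv2
  set c0 : Config := fun b =>
    if b ∈ Td0 then some (true, Tf b) else if b ∈ Ud0 then some (false, Uf b) else none
    with hc0
  have hc0T : ∀ b ∈ Td0, c0 b = some (true, Tf b) := by
    intro b hb
    rw [hc0]
    simp only [if_pos hb]
  have hc0U : ∀ b ∈ Ud0, c0 b = some (false, Uf b) := by
    intro b hb
    have hbT : b ∉ Td0 := fun h => hdisj0 b h hb
    rw [hc0]
    simp only [if_neg hbT, if_pos hb]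
  have hc0N : ∀ b, b ∉ Td0 → b ∉ Ud0 → c0 b = none := by
    intro b hb1 hb2
    rw [hc0]
    simp only [if_neg hb1, if_neg hb2]
  -- initial invariant for the first pass
  have hI0 : InvP true Td0 Tf M U 0 ((Td0, Tf), (Ud0, Uf), (∅, fun _ => 0)) c0 := by
    refine ⟨?_, rfl, ?_, ?_, ?_, hUgood, hUval, ?_, ?_, ?_, hc0T, ?_, ?_, ?_⟩
    · ext b
      simp only [mem_filter]
      exact ⟨fun hb => ⟨hb, by have := (hTb b hb).2; omega⟩, fun hb => hb.1⟩
    · rw [Finset.disjoint_left]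
      intro b hb1 hb2
      exact hdisj0 b hb1 hb2
    · exact Finset.disjoint_empty_right _
    · exact Finset.disjoint_empty_right _
    · intro a ha; exact absurd ha (Finset.notMem_empty a)
    · intro b hb; exact absurd hb (Finset.notMem_empty b)
    · intro v hv1 hv2; omega
    · exact fun b hb => hc0U b hb
    · intro b hb; exact absurd hb (Finset.notMem_empty b)
    · exact fun b hb1 hb2 _ => hc0N b hb1 hb2
  have hres1 := inv_iterate true Td0 Tf M U _ c0 hTgood hTb hTsurj hI0 M (le_refl M)
  rw [WApre_A] at hres1
  set st1 := infusionStep^[M] ((Td0, Tf), (Ud0, Uf), (∅, fun _ => 0)) with hst1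
  obtain ⟨g1, g2, g3, g4, g5, g6, g7, g8, g9, g10, g11, g12, g13, g14⟩ := hres1
  have hT1empty : st1.1.1 = ∅ := by
    rw [g1]
    ext b
    simp only [mem_filter, Finset.notMem_empty, iff_false, not_and]
    intro hb hle
    have := (hTb b hb).1
    omega
  -- facts about the outputs of the first pass
  have hmax1 : maxEntry st1.2.1.1 st1.2.1.2 = U := by
    apply maxEntry_eq
    · intro b hb
      exact ((g7 (st1.2.1.2 b)).mp ⟨b, hb, rfl⟩).2
    · by_cases hU0 : U = 0
      · exact Or.inl hU0
      · exact Or.inr ((g7 U).mpr ⟨by omega, le_refl U⟩)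
  have hval2 : ∀ v, (∃ b ∈ st1.2.2.1, st1.2.2.2 b = v) ↔ 1 ≤ v ∧ v ≤ M := by
    intro v
    constructor
    · rintro ⟨b, hb, rfl⟩
      have := g9 b hb
      omega
    · rintro ⟨hv1, hv2⟩
      exact g10 v (by omega) hv2
  have hTb1 : ∀ b ∈ st1.2.1.1, 1 ≤ st1.2.1.2 b ∧ st1.2.1.2 b ≤ U := by
    intro b hb
    exact (g7 (st1.2.1.2 b)).mp ⟨b, hb, rfl⟩
  have hTsurj1 : ∀ v, 1 ≤ v → v ≤ U → ∃ b ∈ st1.2.1.1, st1.2.1.2 b = v := by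
    intro v hv1 hv2
    exact (g7 v).mpr ⟨hv1, hv2⟩
  -- initial invariant for the second pass
  have hI0' : InvP false st1.2.1.1 st1.2.1.2 U M 0
      ((st1.2.1.1, st1.2.1.2), (st1.2.2.1, st1.2.2.2), (∅, fun _ => 0))
      (applyW (Aword M U) c0) := by
    refine ⟨?_, rfl, ?_, ?_, ?_, g8, hval2, ?_, ?_, ?_, ?_, ?_, ?_, ?_⟩
    · ext b
      simp only [mem_filter]
      exact ⟨fun hb => ⟨hb, by have := (hTb1 b hb).2; omega⟩, fun hb => hb.1⟩
    · exact g5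
    · exact Finset.disjoint_empty_right _
    · exact Finset.disjoint_empty_right _
    · intro a ha; exact absurd ha (Finset.notMem_empty a)
    · intro b hb; exact absurd hb (Finset.notMem_empty b)
    · intro v hv1 hv2; omega
    · exact fun b hb => g12 b hb
    · exact fun b hb => g13 b hb
    · intro b hb; exact absurd hb (Finset.notMem_empty b)
    · intro b hb1 hb2 _
      refine g14 b ?_ hb1 hb2
      rw [hT1empty]
      exact Finset.notMem_empty b
  have hres2 := inv_iterate false st1.2.1.1 st1.2.1.2 U M _ _ g6 hTb1 hTsurj1 hI0' U
    (le_refl U)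
  rw [WApre_B] at hres2
  have hcfin : applyW (Bword M U) (applyW (Aword M U) c0) = c0 := Bword_Aword M U c0
  rw [hcfin] at hres2
  set st2 := infusionStep^[U]
    ((st1.2.1.1, st1.2.1.2), (st1.2.2.1, st1.2.2.2), (∅, fun _ => 0)) with hst2
  obtain ⟨k1, k2, k3, k4, k5, k6, k7, k8, k9, k10, k11, k12, k13, k14⟩ := hres2
  have hT2empty : st2.1.1 = ∅ := by
    rw [k1]
    ext b
    simp only [mem_filter, Finset.notMem_empty, iff_false, not_and]
    intro hb hle
    have := (hTb1 b hb).1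
    omega
  -- identify the double infusion with the second pass
  have hKI2 : (KInfusion (KInfusion (lam \ alpha) Tf (nu \ lam) Uf).1.1
               (KInfusion (lam \ alpha) Tf (nu \ lam) Uf).1.2
               (KInfusion (lam \ alpha) Tf (nu \ lam) Uf).2.1
               (KInfusion (lam \ alpha) Tf (nu \ lam) Uf).2.2) = (st2.2.1, st2.2.2) := by
    show ((infusionStep^[maxEntry st1.2.1.1 st1.2.1.2]
      ((st1.2.1.1, st1.2.1.2), (st1.2.2.1, st1.2.2.2), (∅, fun _ => 0))).2.1,
      (infusionStep^[maxEntry st1.2.1.1 st1.2.1.2]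
      ((st1.2.1.1, st1.2.1.2), (st1.2.2.1, st1.2.2.2), (∅, fun _ => 0))).2.2)
      = (st2.2.1, st2.2.2)
    rw [hmax1, ← hst2]
  rw [hKI2]
  -- the second-pass products, compared with the original pair via the configuration
  have hmemT : ∀ b, b ∈ st2.2.1.1 ↔ b ∈ Td0 := by
    intro b
    constructor
    · intro hb
      have := k12 b hb
      by_cases hbT : b ∈ Td0
      · exact hbT
      · by_cases hbU : b ∈ Ud0
        · rw [hc0U b hbU] at this
          exact absurd this (by simp)
        · rw [hc0N b hbT hbU] at this
          exact absurd this (by simp)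
    · intro hb
      by_contra hbn
      by_cases hbR : b ∈ st2.2.2.1
      · have := k13 b hbR
        rw [hc0T b hb] at this
        exact absurd this (by simp)
      · have := k14 b (by rw [hT2empty]; exact Finset.notMem_empty b) hbn hbR
        rw [hc0T b hb] at this
        exact absurd this (by simp)
  have hmemU : ∀ b, b ∈ st2.2.2.1 ↔ b ∈ Ud0 := by
    intro b
    constructor
    · intro hb
      have := k13 b hb
      by_cases hbU : b ∈ Ud0
      · exact hbU
      · by_cases hbT : b ∈ Td0
        · rw [hc0T b hbT] at this
          exact absurd this (by simp)
        · rw [hc0N b hbT hbU] at this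
          exact absurd this (by simp)
    · intro hb
      by_contra hbn
      by_cases hbC : b ∈ st2.2.1.1
      · have := k12 b hbC
        rw [hc0U b hb] at this
        exact absurd this (by simp)
      · have := k14 b (by rw [hT2empty]; exact Finset.notMem_empty b) hbC hbn
        rw [hc0U b hb] at this
        exact absurd this (by simp)
  refine ⟨?_, ?_, ?_, ?_⟩
  · ext b; rw [hmemT b]
  · intro b hb
    have hb' : b ∈ st2.2.1.1 := (hmemT b).mpr hb
    have h1 := k12 b hb'
    rw [hc0T b hb] at h1
    have := Option.some.inj h1
    exact (Prod.mk.injEq _ _ _ _ ▸ this).2.symm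
  · ext b; rw [hmemU b]
  · intro b hb
    have hb' : b ∈ st2.2.2.1 := (hmemU b).mpr hb
    have h1 := k13 b hb'
    rw [hc0U b hb] at h1
    have := Option.some.inj h1
    exact (Prod.mk.injEq _ _ _ _ ▸ this).2.symm
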